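/- Let R', S' be positive integers and M ≥ 0 a real number. Let V be any finite set of 9-tuples of integers (b,c,k,w,h,r',r'',s',s'') in which every element satisfies 0 ≤ r' < R' and 0 ≤ s' < S', and such that |φ'1(V)| ≤ M, |φ'2(V)| ≤ M, and |φ'3(V)| ≤ M. Then |V| ≤ (R'·S')^(1/2) · M^(3/2). (With R' = R/σ_w and S' = S/σ_h this is Lemma 2 of the paper: |V| ≤ (R·S)^(1/2)·M^(3/2)/(σ_w·σ_h)^(1/2).) -/

import Mathlib

set_option synthInstance.maxSize 512

/-- The tuple type `ℤ^9`, with coordinates `(b, c, k, w, h, r', r'', s', s'')`. -/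
abbrev Tuple9 : Type := ℤ × ℤ × ℤ × ℤ × ℤ × ℤ × ℤ × ℤ × ℤ

/-- `φ'1(b,c,k,w,h,r',r'',s',s'') = (b,k,w,h)`. -/
def phi1' : Tuple9 → ℤ × ℤ × ℤ × ℤ
  | (b, _, k, w, h, _, _, _, _) => (b, k, w, h)

/-- `φ'2(b,c,k,w,h,r',r'',s',s'') = (b,c,r',r'',w,s',s'',h)`. -/
def phi2' : Tuple9 → ℤ × ℤ × ℤ × ℤ × ℤ × ℤ × ℤ × ℤ
  | (b, c, _, w, h, r', r'', s', s'') => (b, c, r', r'', w, s', s'', h)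

/-- `φ'3(b,c,k,w,h,r',r'',s',s'') = (c,k,r',r'',s',s'')`. -/
def phi3' : Tuple9 → ℤ × ℤ × ℤ × ℤ × ℤ × ℤ
  | (_, c, k, _, _, r', r'', s', s'') => (c, k, r', r'', s', s'')

/-- Loomis–Whitney-style inequality for the three projections:
`|V|² ≤ |φ'2(V)| · (|φ'1(V)| · |φ'3(V)|)`. -/
theorem key_sq_bound (V : Finset Tuple9) :
    V.card ^ 2 ≤ (V.image phi2').card * ((V.image phi1').card * (V.image phi3').card) := by
  classical
  set A := V.image phi1' with hA
  set B := V.image phi2' with hB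
  set C := V.image phi3' with hC
  set f : (ℤ × ℤ × ℤ × ℤ × ℤ × ℤ × ℤ × ℤ) → ℕ :=
    fun p => (V.filter fun v => phi2' v = p).card with hf
  have hsum : V.card = ∑ p ∈ B, f p := Finset.card_eq_sum_card_image phi2' V
  set P := (V ×ˢ V).filter (fun q => phi2' q.1 = phi2' q.2) with hP
  have hPcard : ∑ p ∈ B, f p ^ 2 = P.card := by
    have hU : P = B.biUnion fun p =>
        (V.filter fun v => phi2' v = p) ×ˢ (V.filter fun v => phi2' v = p) := by
      ext ⟨v, w⟩
      simp only [hP, Finset.mem_filter, Finset.mem_product, Finset.mem_biUnion, hB,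
        Finset.mem_image]
      constructor
      · rintro ⟨⟨hv, hw⟩, he⟩
        exact ⟨phi2' w, ⟨w, hw, rfl⟩, ⟨hv, he⟩, hw, rfl⟩
      · rintro ⟨p, -, ⟨hv, hvp⟩, hw, hwp⟩
        exact ⟨⟨hv, hw⟩, hvp.trans hwp.symm⟩
    rw [hU, Finset.card_biUnion]
    · refine Finset.sum_congr rfl fun p _ => ?_
      rw [Finset.card_product, sq]
    · intro p hp q hq hpq
      simp only [Finset.disjoint_left, Finset.mem_product, Finset.mem_filter]
      rintro ⟨v, w⟩ ⟨⟨-, hvp⟩, -⟩ ⟨⟨-, hvq⟩, -⟩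
      exact hpq (hvp.symm.trans hvq)
  have hPle : P.card ≤ A.card * C.card := by
    rw [← Finset.card_product]
    apply Finset.card_le_card_of_injOn (fun q => (phi1' q.1, phi3' q.2))
    · rintro ⟨v, w⟩ hq
      simp only [hP, Finset.mem_coe, Finset.mem_filter, Finset.mem_product] at hq
      simp only [Finset.mem_coe, Finset.mem_product, hA, hC, Finset.mem_image]
      exact ⟨⟨v, hq.1.1, rfl⟩, ⟨w, hq.1.2, rfl⟩⟩
    · rintro ⟨⟨b,c,k,w,h,r,r2,s,s2⟩, ⟨b',c',k',w',h',r',r2',s',s2'⟩⟩ hq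
        ⟨⟨b2,c2,k2,w2,h2,rb,rb2,sb,sb2⟩, ⟨b2',c2',k2',w2',h2',rb',rb2',sb',sb2'⟩⟩ hq2 heq
      simp only [hP, Finset.mem_filter, Finset.mem_product, Finset.mem_coe] at hq hq2
      simp only [phi1', phi2', phi3', Prod.mk.injEq] at hq hq2 heq ⊢
      obtain ⟨-, e1⟩ := hq
      obtain ⟨-, e2⟩ := hq2
      obtain ⟨e3, e4⟩ := heq
      refine ⟨?_, ?_⟩ <;> omega
  calc V.card ^ 2 = (∑ p ∈ B, f p) ^ 2 := by rw [hsum]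
    _ ≤ B.card * ∑ p ∈ B, f p ^ 2 := by
        have := sq_sum_le_card_mul_sum_sq (s := B) (f := fun p => (f p : ℤ))
        exact_mod_cast this
    _ = B.card * P.card := by rw [hPcard]
    _ ≤ B.card * (A.card * C.card) := Nat.mul_le_mul_left _ hPle

theorem cnn_small_filter_counting_bound (R' S' : ℤ) (hR' : 0 < R') (hS' : 0 < S')
    (M : ℝ) (hM : 0 ≤ M) (V : Finset Tuple9)
    (hbound : ∀ v ∈ V, 0 ≤ v.2.2.2.2.2.1 ∧ v.2.2.2.2.2.1 < R' ∧
      0 ≤ v.2.2.2.2.2.2.2.1 ∧ v.2.2.2.2.2.2.2.1 < S')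
    (h1 : ((V.image phi1').card : ℝ) ≤ M)
    (h2 : ((V.image phi2').card : ℝ) ≤ M)
    (h3 : ((V.image phi3').card : ℝ) ≤ M) :
    (V.card : ℝ) ≤ Real.sqrt ((R' : ℝ) * (S' : ℝ)) * M ^ ((3 : ℝ) / 2) := by
  have key := key_sq_bound V
  have hsq : (V.card : ℝ) ^ 2 ≤ M ^ 3 := by
    have : ((V.card ^ 2 : ℕ) : ℝ) ≤ (((V.image phi2').card *
        ((V.image phi1').card * (V.image phi3').card) : ℕ) : ℝ) := by exact_mod_cast key
    push_cast at this
    calc ((V.card : ℝ)) ^ 2 ≤ ((V.image phi2').card : ℝ) *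
          (((V.image phi1').card : ℝ) * ((V.image phi3').card : ℝ)) := this
      _ ≤ M * (M * M) := by
          have c3 : (0:ℝ) ≤ ((V.image phi3').card : ℝ) := Nat.cast_nonneg _
          have c13 : (0:ℝ) ≤ ((V.image phi1').card : ℝ) * ((V.image phi3').card : ℝ) := by
            positivity
          exact mul_le_mul h2 (mul_le_mul h1 h3 c3 hM) c13 hM
      _ = M ^ 3 := by ring
  have hpow : (M ^ ((3 : ℝ) / 2)) ^ 2 = M ^ 3 := by
    rw [← Real.rpow_natCast (M ^ ((3 : ℝ) / 2)) 2, ← Real.rpow_mul hM]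
    norm_num
  have hle : (V.card : ℝ) ≤ M ^ ((3 : ℝ) / 2) := by
    have hnn : (0 : ℝ) ≤ M ^ ((3 : ℝ) / 2) := Real.rpow_nonneg hM _
    nlinarith [hsq, hpow, (Nat.cast_nonneg V.card : (0:ℝ) ≤ (V.card : ℝ))]
  have hone : (1 : ℝ) ≤ Real.sqrt ((R' : ℝ) * (S' : ℝ)) := by
    rw [show (1:ℝ) = Real.sqrt 1 from (Real.sqrt_one).symm]
    apply Real.sqrt_le_sqrt
    have : (1:ℝ) ≤ (R':ℝ) := by exact_mod_cast hR'
    have h2' : (1:ℝ) ≤ (S':ℝ) := by exact_mod_cast hS'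
    nlinarith
  calc (V.card : ℝ) ≤ M ^ ((3 : ℝ) / 2) := hle
    _ ≤ Real.sqrt ((R' : ℝ) * (S' : ℝ)) * M ^ ((3 : ℝ) / 2) :=
        le_mul_of_one_le_left (Real.rpow_nonneg hM _) hone
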